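/- Let X and Y be finite sets, let f(·|θ) be a family of strictly positive probability mass functions on X with θ ↦ f(x|θ) differentiable for every x, and let T : X → Y be a statistic. Suppose T is sufficient in the factorization sense: there exist functions g : Y × Θ → ℝ and h : X → ℝ with f(x|θ) = g(T(x), θ) · h(x) for all x and θ. Then the Fisher information of T equals the Fisher information of the full data: Σ_{y∈Y, f_T(y|θ)>0} (d/dθ log f_T(y|θ))² · f_T(y|θ) = Σ_{x∈X} (d/dθ log f(x|θ))² · f(x|θ), where f_T(y|θ) = Σ_{x : T(x)=y} f(x|θ). -/

import Mathlib

open scoped Classical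

/-- If the statistic `T : X → Y` is sufficient in the factorization sense,
i.e. `f(x|θ) = g(T x, θ) · h(x)` for all `x` and all `θ` in the parameter interval, then
the Fisher information of the induced model `f_T(y|θ) = ∑_{x : T x = y} f(x|θ)` equals the
Fisher information of the full-data model. -/
theorem fisher_information_sufficient_statistic
    {X Y : Type*} [Fintype X] [Fintype Y]
    (a b : ℝ) (f : X → ℝ → ℝ) (T : X → Y) (g : Y → ℝ → ℝ) (h : X → ℝ)
    (hpos : ∀ x : X, ∀ θ ∈ Set.Ioo a b, 0 < f x θ)
    (hdiff : ∀ x : X, ∀ θ ∈ Set.Ioo a b, DifferentiableAt ℝ (f x) θ)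
    (hfact : ∀ x : X, ∀ θ ∈ Set.Ioo a b, f x θ = g (T x) θ * h x) :
    ∀ θ ∈ Set.Ioo a b,
      ∑ y ∈ Finset.univ.filter
          (fun y : Y => 0 < ∑ x ∈ Finset.univ.filter (fun x : X => T x = y), f x θ),
        (deriv (fun t => Real.log
            (∑ x ∈ Finset.univ.filter (fun x : X => T x = y), f x t)) θ) ^ 2
          * ∑ x ∈ Finset.univ.filter (fun x : X => T x = y), f x θ
      = ∑ x : X, (deriv (fun t => Real.log (f x t)) θ) ^ 2 * f x θ := by
  intro θ hθ
  have hmem : Set.Ioo a b ∈ nhds θ := Ioo_mem_nhds hθ.1 hθ.2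
  have hne : ∀ x : X, f x θ ≠ 0 := fun x => (hpos x θ hθ).ne'
  have hh : ∀ x : X, h x ≠ 0 := by
    intro x hx
    have hp := hpos x θ hθ
    rw [hfact x θ hθ, hx, mul_zero] at hp
    exact lt_irrefl 0 hp
  have hratio : ∀ x x' : X, T x = T x' →
      deriv (f x) θ / f x θ = deriv (f x') θ / f x' θ := by
    intro x x' e
    have heq : (fun t => f x t * h x') =ᶠ[nhds θ] (fun t => f x' t * h x) := by
      filter_upwards [hmem] with t ht
      rw [hfact x t ht, hfact x' t ht, e]; ring
    have hd : deriv (fun t => f x t * h x') θ = deriv (fun t => f x' t * h x) θ :=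
      heq.deriv_eq
    rw [deriv_mul_const (hdiff x θ hθ), deriv_mul_const (hdiff x' θ hθ)] at hd
    have hv : f x θ * h x' = f x' θ * h x := heq.eq_of_nhds
    calc deriv (f x) θ / f x θ
        = (deriv (f x) θ * h x') / (f x θ * h x') := (mul_div_mul_right _ _ (hh x')).symm
      _ = (deriv (f x') θ * h x) / (f x' θ * h x) := by rw [hd, hv]
      _ = deriv (f x') θ / f x' θ := mul_div_mul_right _ _ (hh x)
  have hlog : ∀ x : X, deriv (fun t => Real.log (f x t)) θ = deriv (f x) θ / f x θ :=
    fun x => (((hdiff x θ hθ).hasDerivAt).log (hne x)).deriv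
  have key : ∀ y : Y, (Finset.univ.filter (fun x : X => T x = y)).Nonempty →
      (deriv (fun t => Real.log
          (∑ x ∈ Finset.univ.filter (fun x : X => T x = y), f x t)) θ) ^ 2
        * ∑ x ∈ Finset.univ.filter (fun x : X => T x = y), f x θ
      = ∑ x ∈ Finset.univ.filter (fun x : X => T x = y),
          (deriv (fun t => Real.log (f x t)) θ) ^ 2 * f x θ := by
    intro y ⟨x₀, hx₀⟩
    have hTx₀ : T x₀ = y := (Finset.mem_filter.mp hx₀).2
    set L := deriv (f x₀) θ / f x₀ θ with hL
    have hLx : ∀ x ∈ Finset.univ.filter (fun x : X => T x = y),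
        deriv (f x) θ / f x θ = L := by
      intro x hx
      exact hratio x x₀ ((Finset.mem_filter.mp hx).2.trans hTx₀.symm)
    have hSpos : 0 < ∑ x ∈ Finset.univ.filter (fun x : X => T x = y), f x θ :=
      Finset.sum_pos (fun x _ => hpos x θ hθ) ⟨x₀, hx₀⟩
    have hS : HasDerivAt (fun t => ∑ x ∈ Finset.univ.filter (fun x : X => T x = y), f x t)
        (∑ x ∈ Finset.univ.filter (fun x : X => T x = y), deriv (f x) θ) θ :=
      HasDerivAt.fun_sum (fun x _ => (hdiff x θ hθ).hasDerivAt)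
    have hsum : (∑ x ∈ Finset.univ.filter (fun x : X => T x = y), deriv (f x) θ)
        = L * ∑ x ∈ Finset.univ.filter (fun x : X => T x = y), f x θ := by
      rw [Finset.mul_sum]
      refine Finset.sum_congr rfl fun x hx => ?_
      rw [← hLx x hx, div_mul_cancel₀ _ (hne x)]
    have hdlog : deriv (fun t => Real.log
        (∑ x ∈ Finset.univ.filter (fun x : X => T x = y), f x t)) θ = L := by
      rw [(hS.log hSpos.ne').deriv, hsum, mul_div_assoc, div_self hSpos.ne', mul_one]
    rw [hdlog, Finset.mul_sum]
    refine Finset.sum_congr rfl fun x hx => ?_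
    rw [hlog x, hLx x hx]
  rw [← Finset.sum_fiberwise Finset.univ T
      (fun x => (deriv (fun t => Real.log (f x t)) θ) ^ 2 * f x θ)]
  rw [Finset.sum_filter]
  refine Finset.sum_congr rfl fun y _ => ?_
  by_cases hy : (Finset.univ.filter (fun x : X => T x = y)).Nonempty
  · have : 0 < ∑ x ∈ Finset.univ.filter (fun x : X => T x = y), f x θ :=
      Finset.sum_pos (fun x _ => hpos x θ hθ) hy
    rw [if_pos this, key y hy]
  · rw [Finset.not_nonempty_iff_eq_empty] at hy
    rw [hy]
    simp
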